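/- Let G be a pointed projective matroid (a finitary simple pointed matroid satisfying the projective law), with the associated commutative mosaic structure (0 the identity, x + x = {x, 0}, and x + y = C({x,y}) \ {x, y, 0} for distinct nonzero x, y). Then for every subset S ⊆ G, the matroid closure C(S) equals the strict submosaic generated by S; in particular the closed subsets of G are exactly the strict submosaics. -/

import Mathlib

open Classical

/-- In a pointed projective matroid, the closure of any subset equals the strict
submosaic it generates; in particular the closed sets are exactly the strict submosaics. -/
theorem stmt_19 {G : Type*} (C : Set G → Set G) (z : G)
    (hext : ∀ S : Set G, S ⊆ C S)
    (hmono : ∀ S T : Set G, S ⊆ T → C S ⊆ C T)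
    (hidem : ∀ S : Set G, C (C S) = C S)
    (hexch : ∀ (x y : G) (S : Set G), x ∉ C S → x ∈ C (insert y S) → y ∈ C (insert x S))
    (hzero : C ∅ = {z}) (hsimple : ∀ x : G, C {x} = {x, z})
    (hfin : ∀ S : Set G, C S = ⋃ T ∈ {T : Set G | T ⊆ S ∧ T.Finite}, C T)
    (hproj : ∀ S T : Set G, C (S ∪ T) = ⋃ x ∈ C S, ⋃ y ∈ C T, C {x, y}) :
    let add : G → G → Set G := fun x y =>
      if x = z then {y} else if y = z then {x}
      else if x = y then {x, z} else C {x, y} \ {x, y, z}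
    ∀ S : Set G,
      C S = ⋂₀ {T : Set G | S ⊆ T ∧ z ∈ T ∧ ∀ x ∈ T, ∀ y ∈ T, add x y ⊆ T} ∧
      (C S = S ↔ (z ∈ S ∧ ∀ x ∈ S, ∀ y ∈ S, add x y ⊆ S)) := by
  intro add S
  have hzC : ∀ U : Set G, z ∈ C U := by
    intro U
    have h := hmono ∅ U (Set.empty_subset U)
    rw [hzero] at h
    exact h rfl
  -- add x y is always contained in C {x,y}
  have haddC : ∀ x y : G, add x y ⊆ C {x, y} := by
    intro x y
    simp only [add]
    split_ifs with h1 h2 h3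
    · subst h1
      intro w hw
      rw [Set.mem_singleton_iff] at hw
      subst hw
      exact hext _ (by simp)
    · subst h2
      intro w hw
      rw [Set.mem_singleton_iff] at hw
      subst hw
      exact hext _ (by simp)
    · subst h3
      intro w hw
      rcases hw with rfl | rfl
      · exact hext _ (by simp)
      · exact hzC _
    · exact Set.diff_subset
  -- any add-closed set containing z absorbs C of pairs of its elements
  have hpair : ∀ T : Set G, z ∈ T → (∀ x ∈ T, ∀ y ∈ T, add x y ⊆ T) →
      ∀ u ∈ T, ∀ v ∈ T, C {u, v} ⊆ T := by
    intro T hzT hcl u hu v hv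
    by_cases huz : u = z
    · subst u
      have hsub2 : ({z, v} : Set G) ⊆ C {v} := by
        intro w hw
        rcases hw with rfl | rfl
        · exact hzC _
        · exact hext _ rfl
      have h1 : C {z, v} ⊆ C {v} := by
        calc C {z, v} ⊆ C (C {v}) := hmono _ _ hsub2
          _ = C {v} := hidem _
      intro w hw
      have h2 := h1 hw
      rw [hsimple] at h2
      rcases h2 with rfl | rfl <;> assumption
    by_cases hvz : v = z
    · subst v
      have hsub2 : ({u, z} : Set G) ⊆ C {u} := by
        intro w hw
        rcases hw with rfl | rfl
        · exact hext _ rfl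
        · exact hzC _
      have h1 : C {u, z} ⊆ C {u} := by
        calc C {u, z} ⊆ C (C {u}) := hmono _ _ hsub2
          _ = C {u} := hidem _
      intro w hw
      have h2 := h1 hw
      rw [hsimple] at h2
      rcases h2 with rfl | rfl <;> assumption
    by_cases huv : u = v
    · subst huv
      have he : ({u, u} : Set G) = {u} := by simp
      rw [he, hsimple]
      intro w hw
      rcases hw with rfl | rfl <;> assumption
    · intro w hw
      by_cases hmem : w ∈ ({u, v, z} : Set G)
      · rcases hmem with rfl | rfl | rfl <;> assumption
      · have hwadd : w ∈ add u v := by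
          simp only [add, if_neg huz, if_neg hvz, if_neg huv]
          exact ⟨hw, hmem⟩
        exact hcl u hu v hv hwadd
  -- the hard direction: C S is contained in every member of the family
  have hsub : ∀ T : Set G, S ⊆ T → z ∈ T → (∀ x ∈ T, ∀ y ∈ T, add x y ⊆ T) →
      C S ⊆ T := by
    intro T hST hzT hcl w hw
    rw [hfin] at hw
    simp only [Set.mem_iUnion, Set.mem_setOf_eq] at hw
    obtain ⟨F, ⟨hFS, hFfin⟩, hwF⟩ := hw
    have key : ∀ F : Set G, F.Finite → F ⊆ T → C F ⊆ T := by
      intro F hF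
      refine Set.Finite.induction_on (motive := fun F _ => F ⊆ T → C F ⊆ T) F hF ?_ ?_
      · intro _
        rw [hzero]
        intro w hw
        rw [Set.mem_singleton_iff] at hw
        subst hw; exact hzT
      · intro a F' ha hFfin ih hsubT
        have heq : insert a F' = {a} ∪ F' := rfl
        rw [heq, hproj]
        intro w hw
        simp only [Set.mem_iUnion] at hw
        obtain ⟨x, hx, y, hy, hw⟩ := hw
        have hxT : x ∈ T := by
          rw [hsimple] at hx
          rcases hx with rfl | rfl
          · exact hsubT (Set.mem_insert _ _)
          · exact hzT
        have hyT : y ∈ T := ih (fun b hb => hsubT (Set.mem_insert_of_mem _ hb)) hy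
        exact hpair T hzT hcl x hxT y hyT hw
    exact key F hFfin (hFS.trans hST) hwF
  -- C S is add-closed
  have hclCS : ∀ x ∈ C S, ∀ y ∈ C S, add x y ⊆ C S := by
    intro x hx y hy
    have h1 : ({x, y} : Set G) ⊆ C S := by
      intro w hw; rcases hw with rfl | rfl <;> assumption
    calc add x y ⊆ C {x, y} := haddC x y
      _ ⊆ C (C S) := hmono _ _ h1
      _ = C S := hidem _
  have hmemC : C S ∈ {T : Set G | S ⊆ T ∧ z ∈ T ∧ ∀ x ∈ T, ∀ y ∈ T, add x y ⊆ T} :=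
    ⟨hext S, hzC S, hclCS⟩
  constructor
  · apply subset_antisymm
    · intro w hw
      intro T hT
      exact hsub T hT.1 hT.2.1 hT.2.2 hw
    · exact Set.sInter_subset_of_mem hmemC
  · constructor
    · intro h
      rw [← h]
      exact ⟨hzC S, hclCS⟩
    · rintro ⟨hz, hcl⟩
      exact subset_antisymm (hsub S subset_rfl hz hcl) (hext S)
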